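/- Let l be a positive integer with l ≡ 3 (mod 4) and let q be a positive integer. Then: τ(χ^{(4l)}, q) = 0 if q is even; τ(χ^{(4l)}, q) = −2i·τ(χ_l, q) if q ≡ 1 (mod 4); and τ(χ^{(4l)}, q) = 2i·τ(χ_l, q) if q ≡ 3 (mod 4). -/

import Mathlib

open Complex

/-- The Gauss sum `τ(χ, q) = ∑_{j=0}^{n-1} χ(j) e(jq/n)` of a function `χ` regarded as a
character modulo `n`, at the integer `q`, where `e(z) = exp(2πiz)`. -/
noncomputable def tauChar (n : ℕ) (χ : ℕ → ℂ) (q : ℤ) : ℂ :=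
  ∑ j ∈ Finset.range n, χ j * Complex.exp (2 * Real.pi * Complex.I * j * q / n)

/-- The quadratic character `χ_n = (·/n)` given by the Jacobi symbol, for odd positive `n`. -/
noncomputable def chiJacobi (n : ℕ) : ℕ → ℂ := fun m => (jacobiSym m n : ℂ)

/-- The character `χ^{(4m)}` modulo `4m`: it vanishes on even integers and takes the value
given by the Jacobi symbol `(m/j)` at odd `j`. -/
noncomputable def chi4m (m : ℕ) : ℕ → ℂ := fun j => if Odd j then (jacobiSym m j : ℂ) else 0

noncomputable def E (x : ℂ) : ℂ := Complex.exp (2 * Real.pi * Complex.I * x)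

lemma E_add (x y : ℂ) : E (x + y) = E x * E y := by
  simp [E, mul_add, Complex.exp_add]

lemma E_nat (m : ℕ) : E m = 1 := by
  rw [E, show (2 * (Real.pi:ℂ) * I * m) = (m:ℂ) * (2 * Real.pi * I) by ring]
  exact Complex.exp_nat_mul_two_pi_mul_I m

lemma E_quarter (k : ℕ) : E ((k:ℂ) / 4) = I ^ k := by
  rw [E, show 2 * (Real.pi:ℂ) * I * (k/4) = (k:ℂ) * ((Real.pi/2 : ℝ) * I) by push_cast; ring,
    Complex.exp_nat_mul, Complex.exp_mul_I]
  congr 1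
  rw [show ((Real.pi/2 : ℝ):ℂ) = (Real.pi:ℂ)/2 by push_cast; ring]
  simp [Complex.cos_pi_div_two, Complex.sin_pi_div_two]

lemma I_pow_mod (k : ℕ) : I ^ k = I ^ (k % 4) := by
  conv_lhs => rw [← Nat.div_add_mod k 4]
  rw [pow_add, pow_mul, I_pow_four, one_pow, one_mul]

lemma tauChar_eq (n : ℕ) (χ : ℕ → ℂ) (q : ℕ) :
    tauChar n χ q = ∑ j ∈ Finset.range n, χ j * E ((j : ℂ) * q / n) := by
  refine Finset.sum_congr rfl fun j _ => ?_
  rw [E]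
  congr 2
  push_cast
  ring

lemma F4 (l a c b : ℕ) (hl4 : l % 4 = 3) (ha : a < 4) :
    (l*l*a + 4*c*b) % (4*l) % 4 = a := by
  have h1 : l*l % 4 = 1 := by rw [Nat.mul_mod, hl4]
  rw [Nat.mod_mod_of_dvd _ ⟨l, rfl⟩, mul_assoc 4, Nat.add_mul_mod_self_left,
    Nat.mul_mod, h1, one_mul, Nat.mod_mod_of_dvd _ (dvd_refl 4), Nat.mod_eq_of_lt ha]

lemma Fl (l a c b : ℕ) (h4c : 4 * c = l + 1) (hb : b < l) :
    (l*l*a + 4*c*b) % (4*l) % l = b := by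
  have hx : l*l*a + 4*c*b = l*(l*a + b) + b := by
    rw [show 4*c*b = (4*c)*b from rfl, h4c]; ring
  rw [Nat.mod_mod_of_dvd _ ⟨4, by ring⟩, hx, Nat.mul_add_mod, Nat.mod_eq_of_lt hb]

lemma Fcrt (l c : ℕ) (hl4 : l % 4 = 3) (h4c : 4 * c = l + 1) (j : ℕ) (hj : j < 4*l) :
    (l*l*(j%4) + 4*c*(j%l)) % (4*l) = j := by
  have hco : Nat.Coprime 4 l := by
    rw [Nat.Coprime, Nat.gcd_rec, hl4]; decide
  have h4 : (l*l*(j%4) + 4*c*(j%l)) ≡ j [MOD 4] := by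
    have h1 : l*l % 4 = 1 := by rw [Nat.mul_mod, hl4]
    show _ % 4 = _ % 4
    rw [mul_assoc 4, Nat.add_mul_mod_self_left, Nat.mul_mod, h1, one_mul,
      Nat.mod_mod_of_dvd _ (dvd_refl 4), Nat.mod_mod_of_dvd _ (dvd_refl 4)]
  have hl : (l*l*(j%4) + 4*c*(j%l)) ≡ j [MOD l] := by
    have hx : l*l*(j%4) + 4*c*(j%l) = l*(l*(j%4) + (j%l)) + (j%l) := by
      rw [show 4*c*(j%l) = (4*c)*(j%l) from rfl, h4c]; ring
    show _ % l = _ % l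
    rw [hx, Nat.mul_add_mod, Nat.mod_mod_of_dvd _ (dvd_refl l)]
  have := (Nat.modEq_and_modEq_iff_modEq_mul hco).mp ⟨h4, hl⟩
  calc (l*l*(j%4) + 4*c*(j%l)) % (4*l) = j % (4*l) := this
    _ = j := Nat.mod_eq_of_lt hj

lemma phase (l c q : ℕ) (hl0 : 0 < l) (a b : ℕ) :
    E ((((l*l*a + 4*c*b) % (4*l) : ℕ) : ℂ) * q / ((4*l : ℕ):ℂ))
      = E (((l*a*q : ℕ):ℂ)/4) * E (((c*b*q : ℕ):ℂ)/l) := by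
  have hx : (l*l*a + 4*c*b) % (4*l) + 4*l*((l*l*a + 4*c*b)/(4*l)) = l*l*a + 4*c*b :=
    Nat.mod_add_div _ _
  have h1 : (((l*l*a + 4*c*b) % (4*l) : ℕ):ℂ) + 4*l*(((l*l*a + 4*c*b)/(4*l) : ℕ):ℂ)
      = (l:ℂ)*l*a + 4*c*b := by exact_mod_cast congrArg (Nat.cast : ℕ → ℂ) hx
  have hl0' : (l:ℂ) ≠ 0 := Nat.cast_ne_zero.mpr (by omega)
  have key : (((l*l*a + 4*c*b) % (4*l) : ℕ):ℂ) * q / ((4*l : ℕ):ℂ)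
        + ((((l*l*a + 4*c*b)/(4*l))*q : ℕ):ℂ)
      = ((l*a*q : ℕ):ℂ)/4 + ((c*b*q : ℕ):ℂ)/l := by
    push_cast
    field_simp
    linear_combination (q:ℂ) * h1
  calc E ((((l*l*a + 4*c*b) % (4*l) : ℕ):ℂ) * q / ((4*l : ℕ):ℂ))
      = E ((((l*l*a + 4*c*b) % (4*l) : ℕ):ℂ) * q / ((4*l : ℕ):ℂ))
          * E ((((l*l*a + 4*c*b)/(4*l))*q : ℕ)) := by rw [E_nat, mul_one]
    _ = E ((((l*l*a + 4*c*b) % (4*l) : ℕ):ℂ) * q / ((4*l : ℕ):ℂ)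
          + ((((l*l*a + 4*c*b)/(4*l))*q : ℕ):ℂ)) := (E_add _ _).symm
    _ = E (((l*a*q : ℕ):ℂ)/4 + ((c*b*q : ℕ):ℂ)/l) := by rw [key]
    _ = _ := E_add _ _

lemma jac1 (l b j : ℕ) (hl4 : l % 4 = 3) (hj4 : j % 4 = 1) (hjl : j % l = b) :
    jacobiSym l j = jacobiSym b l := by
  have hodd : Odd l := Nat.odd_iff.mpr (by omega)
  rw [← jacobiSym.quadratic_reciprocity_one_mod_four hj4 hodd, jacobiSym.mod_left,
    ← Int.natCast_mod, hjl]

lemma jac3 (l b j : ℕ) (hl4 : l % 4 = 3) (hj4 : j % 4 = 3) (hjl : j % l = b) :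
    jacobiSym l j = - jacobiSym b l := by
  have h := jacobiSym.quadratic_reciprocity_three_mod_four hj4 hl4
  have h2 : (jacobiSym l j : ℤ) = - jacobiSym j l := by omega
  rw [h2, jacobiSym.mod_left, ← Int.natCast_mod, hjl]

lemma jac4 (l : ℕ) (hl4 : l % 4 = 3) : jacobiSym (4:ℤ) l = 1 := by
  rw [show (4:ℤ) = 2^2 by norm_num]
  apply jacobiSym.sq_one'
  show Nat.gcd 2 l = 1
  rw [Nat.gcd_rec, show l % 2 = 1 by omega]
  decide

lemma innerSumGauss (l c q : ℕ) (hl4 : l % 4 = 3) (h4c : 4*c = l+1) :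
    ∑ b ∈ Finset.range l, (jacobiSym b l : ℂ) * E (((c*b*q : ℕ):ℂ)/l)
      = ∑ b ∈ Finset.range l, (jacobiSym b l : ℂ) * E ((b:ℂ)*q/((l:ℕ):ℂ)) := by
  have hl0 : 0 < l := by omega
  have hl0' : (l:ℂ) ≠ 0 := Nat.cast_ne_zero.mpr (by omega)
  symm
  refine Finset.sum_nbij' (fun b => 4*b % l) (fun b => c*b % l)
    (fun b _ => Finset.mem_range.mpr (Nat.mod_lt _ hl0))
    (fun b _ => Finset.mem_range.mpr (Nat.mod_lt _ hl0)) ?_ ?_ ?_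
  · intro b hb
    have h := (Nat.mod_modEq (4*b) l).mul_left c
    have hc2 : c*(4*b) = l*b + b := by
      rw [show c*(4*b) = (4*c)*b from by ring, h4c]; ring
    calc c*(4*b%l)%l = c*(4*b)%l := h
      _ = b := by rw [hc2, Nat.mul_add_mod, Nat.mod_eq_of_lt (Finset.mem_range.mp hb)]
  · intro b hb
    have h := (Nat.mod_modEq (c*b) l).mul_left 4
    have hc2 : 4*(c*b) = l*b + b := by
      rw [show 4*(c*b) = (4*c)*b from by ring, h4c]; ring
    calc 4*(c*b%l)%l = 4*(c*b)%l := h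
      _ = b := by rw [hc2, Nat.mul_add_mod, Nat.mod_eq_of_lt (Finset.mem_range.mp hb)]
  · intro b hb
    have hjac : jacobiSym (((4*b%l : ℕ)) : ℤ) l = jacobiSym ((b : ℕ) : ℤ) l := by
      rw [jacobiSym.mod_left' (a₂ := ((4*b : ℕ) : ℤ))
        (by push_cast; exact Int.emod_emod_of_dvd _ dvd_rfl),
        show ((4*b : ℕ) : ℤ) = 4 * (b:ℤ) by push_cast; ring, jacobiSym.mul_left,
        jac4 l hl4, one_mul]
    have hE : E (((c*(4*b%l)*q : ℕ):ℂ)/l) = E ((b:ℂ)*q/((l:ℕ):ℂ)) := by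
      have hrd : 4*b % l + l*(4*b/l) = 4*b := Nat.mod_add_div (4*b) l
      have hrdC : ((4*b%l : ℕ):ℂ) + l*((4*b/l : ℕ):ℂ) = 4*b := by
        exact_mod_cast congrArg (Nat.cast : ℕ → ℂ) hrd
      have h4cC : (4:ℂ)*c = l+1 := by exact_mod_cast congrArg (Nat.cast : ℕ → ℂ) h4c
      have key : ((c*(4*b%l)*q : ℕ):ℂ)/l + ((c*(4*b/l)*q : ℕ):ℂ)
          = ((b*q : ℕ):ℂ) + (b:ℂ)*q/((l:ℕ):ℂ) := by
        push_cast
        field_simp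
        linear_combination (c:ℂ)*q*hrdC + (b:ℂ)*q*h4cC
      calc E (((c*(4*b%l)*q : ℕ):ℂ)/l)
          = E (((c*(4*b%l)*q : ℕ):ℂ)/l) * E ((c*(4*b/l)*q : ℕ)) := by rw [E_nat, mul_one]
        _ = E (((c*(4*b%l)*q : ℕ):ℂ)/l + ((c*(4*b/l)*q : ℕ):ℂ)) := (E_add _ _).symm
        _ = E (((b*q : ℕ):ℂ) + (b:ℂ)*q/((l:ℕ):ℂ)) := by rw [key]
        _ = E ((b*q : ℕ)) * E ((b:ℂ)*q/((l:ℕ):ℂ)) := E_add _ _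
        _ = E ((b:ℂ)*q/((l:ℕ):ℂ)) := by rw [E_nat, one_mul]
    rw [hE]
    congr 1
    exact_mod_cast hjac.symm

lemma keyGauss (l : ℕ) (hl4 : l % 4 = 3) (q : ℕ) :
    tauChar (4*l) (chi4m l) q
      = (I^(l*1*q) - I^(l*3*q)) * tauChar l (chiJacobi l) q := by
  have hl0 : 0 < l := by omega
  obtain ⟨c, h4c⟩ : ∃ c, 4*c = l+1 := ⟨(l+1)/4, by omega⟩
  rw [tauChar_eq, tauChar_eq]
  have step1 : ∑ j ∈ Finset.range (4*l), chi4m l j * E ((j:ℂ)*q/((4*l:ℕ):ℂ))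
      = ∑ p ∈ Finset.range 4 ×ˢ Finset.range l,
          chi4m l ((l*l*p.1 + 4*c*p.2) % (4*l))
            * E ((((l*l*p.1 + 4*c*p.2) % (4*l) : ℕ):ℂ)*q/((4*l:ℕ):ℂ)) := by
    refine Finset.sum_nbij' (fun j => (j % 4, j % l))
      (fun p => (l*l*p.1 + 4*c*p.2) % (4*l)) ?_ ?_ ?_ ?_ ?_
    · intro j _
      simp only [Finset.mem_product, Finset.mem_range]
      exact ⟨Nat.mod_lt _ (by norm_num), Nat.mod_lt _ hl0⟩
    · intro p _
      exact Finset.mem_range.mpr (Nat.mod_lt _ (by positivity))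
    · intro j hj
      exact Fcrt l c hl4 h4c j (Finset.mem_range.mp hj)
    · intro p hp
      simp only [Finset.mem_product, Finset.mem_range] at hp
      exact Prod.ext (F4 l p.1 c p.2 hl4 hp.1) (Fl l p.1 c p.2 h4c hp.2)
    · intro j hj
      rw [Fcrt l c hl4 h4c j (Finset.mem_range.mp hj)]
  rw [step1, Finset.sum_product]
  rw [Finset.sum_range_succ, Finset.sum_range_succ, Finset.sum_range_succ,
    Finset.sum_range_one]
  have hodd : ∀ a b : ℕ, a < 4 → b < l → ((l*l*a + 4*c*b) % (4*l)) % 2 = a % 2 := by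
    intro a b ha hb
    rw [← Nat.mod_mod_of_dvd _ (by norm_num : (2:ℕ) ∣ 4), F4 l a c b hl4 ha]
  have hf0 : ∑ b ∈ Finset.range l,
      chi4m l ((l*l*0 + 4*c*b) % (4*l))
        * E ((((l*l*0 + 4*c*b) % (4*l) : ℕ):ℂ)*q/((4*l:ℕ):ℂ)) = 0 := by
    refine Finset.sum_eq_zero fun b hb => ?_
    have h2 := hodd 0 b (by norm_num) (Finset.mem_range.mp hb)
    rw [chi4m, if_neg (by rw [Nat.odd_iff]; omega), zero_mul]
  have hf2 : ∑ b ∈ Finset.range l,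
      chi4m l ((l*l*2 + 4*c*b) % (4*l))
        * E ((((l*l*2 + 4*c*b) % (4*l) : ℕ):ℂ)*q/((4*l:ℕ):ℂ)) = 0 := by
    refine Finset.sum_eq_zero fun b hb => ?_
    have h2 := hodd 2 b (by norm_num) (Finset.mem_range.mp hb)
    rw [chi4m, if_neg (by rw [Nat.odd_iff]; omega), zero_mul]
  have hf1 : ∑ b ∈ Finset.range l,
      chi4m l ((l*l*1 + 4*c*b) % (4*l))
        * E ((((l*l*1 + 4*c*b) % (4*l) : ℕ):ℂ)*q/((4*l:ℕ):ℂ))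
      = E (((l*1*q : ℕ):ℂ)/4)
        * ∑ b ∈ Finset.range l, (jacobiSym b l : ℂ) * E (((c*b*q : ℕ):ℂ)/l) := by
    rw [Finset.mul_sum]
    refine Finset.sum_congr rfl fun b hb => ?_
    have hb' := Finset.mem_range.mp hb
    have h4 := F4 l 1 c b hl4 (by norm_num)
    have h2 := hodd 1 b (by norm_num) hb'
    have hchi : chi4m l ((l*l*1 + 4*c*b) % (4*l)) = ((jacobiSym b l : ℤ) : ℂ) := by
      rw [chi4m]
      rw [if_pos (by rw [Nat.odd_iff]; omega)]
      exact_mod_cast congrArg (Int.cast : ℤ → ℂ)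
        (jac1 l b _ hl4 h4 (Fl l 1 c b h4c hb'))
    rw [hchi, phase l c q hl0 1 b]
    ring
  have hf3 : ∑ b ∈ Finset.range l,
      chi4m l ((l*l*3 + 4*c*b) % (4*l))
        * E ((((l*l*3 + 4*c*b) % (4*l) : ℕ):ℂ)*q/((4*l:ℕ):ℂ))
      = -E (((l*3*q : ℕ):ℂ)/4)
        * ∑ b ∈ Finset.range l, (jacobiSym b l : ℂ) * E (((c*b*q : ℕ):ℂ)/l) := by
    rw [Finset.mul_sum]
    refine Finset.sum_congr rfl fun b hb => ?_
    have hb' := Finset.mem_range.mp hb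
    have h4 := F4 l 3 c b hl4 (by norm_num)
    have h2 := hodd 3 b (by norm_num) hb'
    have hchi : chi4m l ((l*l*3 + 4*c*b) % (4*l)) = -((jacobiSym b l : ℤ) : ℂ) := by
      rw [chi4m]
      rw [if_pos (by rw [Nat.odd_iff]; omega)]
      exact_mod_cast congrArg (Int.cast : ℤ → ℂ)
        (jac3 l b _ hl4 h4 (Fl l 3 c b h4c hb'))
    rw [hchi, phase l c q hl0 3 b]
    ring
  rw [hf0, hf1, hf2, hf3, innerSumGauss l c q hl4 h4c, E_quarter, E_quarter]
  have : ∑ b ∈ Finset.range l, (jacobiSym b l : ℂ) * E ((b:ℂ)*q/((l:ℕ):ℂ))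
      = ∑ j ∈ Finset.range l, chiJacobi l j * E ((j:ℂ)*q/((l:ℕ):ℂ)) := rfl
  rw [this]
  ring

theorem gauss_sum_chi_four_l_of_l_three_mod_four (l : ℕ) (hl : 0 < l) (hl4 : l % 4 = 3)
    (q : ℕ) (hq : 0 < q) :
    (2 ∣ q → tauChar (4 * l) (chi4m l) q = 0) ∧
    (q % 4 = 1 → tauChar (4 * l) (chi4m l) q = -2 * Complex.I * tauChar l (chiJacobi l) q) ∧
    (q % 4 = 3 → tauChar (4 * l) (chi4m l) q = 2 * Complex.I * tauChar l (chiJacobi l) q) := by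
  have e1 : (l*1*q) % 4 = (3 * (q % 4)) % 4 := by
    rw [mul_one, Nat.mul_mod, hl4]
  have e3 : (l*3*q) % 4 = (1 * (q % 4)) % 4 := by
    rw [Nat.mul_mod, Nat.mul_mod l 3, hl4]
  refine ⟨?_, ?_, ?_⟩
  · intro h2
    rw [keyGauss l hl4 q, I_pow_mod (l*1*q), I_pow_mod (l*3*q), e1, e3]
    have : (3 * (q % 4)) % 4 = (1 * (q % 4)) % 4 := by omega
    rw [this, sub_self, zero_mul]
  · intro hq1
    rw [keyGauss l hl4 q, I_pow_mod (l*1*q), I_pow_mod (l*3*q), e1, e3, hq1]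
    norm_num
    ring
  · intro hq3
    rw [keyGauss l hl4 q, I_pow_mod (l*1*q), I_pow_mod (l*3*q), e1, e3, hq3]
    simp only [show (3:ℕ)*(3%4)%4 = 1 from rfl, show (1:ℕ)*(3%4)%4 = 3 from rfl]
    rw [show (I:ℂ)^3 = -I by rw [pow_succ, I_sq]; ring, pow_one]
    ring
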